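/- Let P_n := (1/(2^n · n!)) • D^n[(X² − 1)^n] be the n-th Legendre polynomial over ℝ, where D^n denotes the n-fold formal derivative (Rodrigues' formula). Then for every n ≥ 1, the formal derivative of P_n equals Σ_j (2j+1) • P_j, where the sum ranges over all j with 0 ≤ j ≤ n−1 and n − j odd. -/

import Mathlib

open Polynomial

/-- The `n`-th Legendre polynomial over `ℝ`, via the Rodrigues formula
`P_n = (1/(2^n · n!)) • Dⁿ[(X² − 1)ⁿ]`. -/
noncomputable def legendre (n : ℕ) : Polynomial ℝ :=
  (1 / (2 ^ n * (n.factorial : ℝ))) • derivative^[n] ((X ^ 2 - 1) ^ n)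

/-- Iterated-derivative Leibniz rule for `X * g`. -/
lemma legendre_aux_leib : ∀ (k : ℕ) (g : Polynomial ℝ),
    derivative^[k + 1] (X * g) =
      X * derivative^[k + 1] g + ((k : ℝ) + 1) • derivative^[k] g := by
  intro k
  induction k with
  | zero =>
    intro g
    simp [derivative_mul]
    ring
  | succ k ih =>
    intro g
    rw [Function.iterate_succ_apply, derivative_mul, derivative_X, one_mul,
      iterate_map_add derivative (k + 1), ih (derivative g),
      ← Function.iterate_succ_apply, ← Function.iterate_succ_apply]
    push_cast
    module

lemma legendre_aux_df (m : ℕ) :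
    derivative ((X ^ 2 - 1 : Polynomial ℝ) ^ (m + 1)) =
      (2 * (m : ℝ) + 2) • (X * (X ^ 2 - 1) ^ m) := by
  have hC : (C (2 * (m : ℝ) + 2) : Polynomial ℝ) = C ((m : ℝ) + 1) * C 2 := by
    rw [← C_mul]; ring_nf
  have hd : derivative (X ^ 2 - 1 : Polynomial ℝ) = C 2 * X := by
    simp [derivative_X_pow]; rw [one_add_one_eq_two, map_ofNat]
  rw [derivative_pow, smul_eq_C_mul, hC, hd]
  push_cast
  ring

lemma legendre_aux_xdf (m : ℕ) :
    X * derivative ((X ^ 2 - 1 : Polynomial ℝ) ^ (m + 1)) =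
      (2 * (m : ℝ) + 2) • (X ^ 2 - 1) ^ (m + 1) + (2 * (m : ℝ) + 2) • (X ^ 2 - 1) ^ m := by
  rw [legendre_aux_df]
  simp only [smul_eq_C_mul]
  ring

lemma legendre_aux_keyB (m : ℕ) :
    X * derivative^[m + 2] ((X ^ 2 - 1 : Polynomial ℝ) ^ (m + 1)) =
      ((m : ℝ) + 1) • derivative^[m + 1] ((X ^ 2 - 1) ^ (m + 1)) +
        (2 * (m : ℝ) + 2) • derivative^[m + 1] ((X ^ 2 - 1) ^ m) := by
  have h := congrArg (derivative^[m + 1]) (legendre_aux_xdf m)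
  rw [legendre_aux_leib m, iterate_map_add derivative (m + 1), iterate_derivative_smul,
    iterate_derivative_smul] at h
  simp only [Function.iterate_succ_apply] at h ⊢
  linear_combination (norm := module) h

lemma legendre_aux_hD (m : ℕ) : derivative^[m + 3] ((X ^ 2 - 1 : Polynomial ℝ) ^ (m + 2))
    = ((2 * (m : ℝ) + 4) * (2 * (m : ℝ) + 3)) • derivative^[m + 1] ((X ^ 2 - 1) ^ (m + 1))
      + ((2 * (m : ℝ) + 4) * (2 * (m : ℝ) + 2)) • derivative^[m + 1] ((X ^ 2 - 1) ^ m) := by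
  have h0 : derivative^[m + 3] ((X ^ 2 - 1 : Polynomial ℝ) ^ (m + 2))
      = derivative^[m + 2] (derivative ((X ^ 2 - 1) ^ (m + 2))) :=
    Function.iterate_succ_apply derivative (m + 2) _
  rw [h0, legendre_aux_df (m + 1), iterate_derivative_smul, legendre_aux_leib (m + 1),
    legendre_aux_keyB m]
  push_cast
  module

/-- The key recurrence `P_{m+2}' = (2m+3) P_{m+1} + P_m'`. -/
lemma legendre_rec (m : ℕ) : derivative (legendre (m + 2)) =
    (2 * (m : ℝ) + 3) • legendre (m + 1) + derivative (legendre m) := by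
  simp only [legendre, derivative_smul]
  rw [← Function.iterate_succ_apply' derivative (m + 2),
    ← Function.iterate_succ_apply' derivative m,
    show (m + 2).succ = m + 3 from rfl, show m.succ = m + 1 from rfl, legendre_aux_hD m]
  have h2 : ((m + 2).factorial : ℝ) = (m + 2) * (m + 1) * m.factorial := by
    push_cast [Nat.factorial_succ]; ring
  have h1 : ((m + 1).factorial : ℝ) = (m + 1) * m.factorial := by
    push_cast [Nat.factorial_succ]; ring
  have hf : (m.factorial : ℝ) ≠ 0 := Nat.cast_ne_zero.mpr m.factorial_ne_zero
  match_scalars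
  · rw [h2, h1]; field_simp; ring
  · rw [h2]; field_simp; ring

lemma legendre_zero_eq : legendre 0 = 1 := by
  simp [legendre]

lemma legendre_one_eq : legendre 1 = X := by
  have h := legendre_aux_df 0
  simp only [pow_one, pow_zero, mul_one, Nat.cast_zero, mul_zero, zero_add] at h
  rw [legendre, Function.iterate_one]
  simp only [pow_one]
  rw [h, smul_smul]
  norm_num

lemma legendre_derivative_eq_aux : ∀ n : ℕ, derivative (legendre n) =
    ∑ j ∈ (Finset.range n).filter (fun j => Odd (n - j)),
      (2 * (j : ℝ) + 1) • legendre j := by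
  intro n
  induction n using Nat.twoStepInduction with
  | zero => simp [legendre]
  | one =>
    have hs : (Finset.range 1).filter (fun j => Odd (1 - j)) = {0} := by decide
    rw [hs, Finset.sum_singleton, legendre_one_eq, legendre_zero_eq]
    norm_num
  | more m ih _ =>
    have hset : (Finset.range (m + 2)).filter (fun j => Odd (m + 2 - j)) =
        insert (m + 1) ((Finset.range m).filter (fun j => Odd (m - j))) := by
      ext j
      simp only [Finset.mem_filter, Finset.mem_insert, Finset.mem_range, Nat.odd_iff]
      omega
    have hnot : m + 1 ∉ (Finset.range m).filter (fun j => Odd (m - j)) := by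
      simp only [Finset.mem_filter, Finset.mem_range]
      omega
    rw [legendre_rec m, hset, Finset.sum_insert hnot, ← ih]
    have : (2 * ((m + 1 : ℕ) : ℝ) + 1) = 2 * (m : ℝ) + 3 := by push_cast; ring
    rw [this]

theorem legendre_derivative_eq
    (n : ℕ) (hn : 1 ≤ n) :
    derivative (legendre n) =
      ∑ j ∈ (Finset.range n).filter (fun j => Odd (n - j)),
        (2 * (j : ℝ) + 1) • legendre j :=
  legendre_derivative_eq_aux n
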